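/- Let d ≥ 1 and s > 0. There exists a constant b > 0, depending only on s and d, with the following property: for every E ⊂ ℝ^d, every c > 0, and every A ⊂ ℝ such that for each t ∈ A the slice E ∩ {y ∈ ℝ^d : y₁ = t} has H^0 measure (cardinality) greater than c, one has H^s(E) ≥ b·c·H^s(A). -/

import Mathlib

open MeasureTheory Metric Set Filter
open scoped ENNReal NNReal Topology RealInnerProductSpace

noncomputable section

/-- A unit vector `d` is a limit direction of `A` at `x`: there is a sequence of points of
`A \ {x}` converging to `x` whose normalized directions from `x` converge to `d`. -/
def IsLimitDirection {E : Type*} [NormedAddCommGroup E] [NormedSpace ℝ E]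
    (A : Set E) (x d : E) : Prop :=
  ‖d‖ = 1 ∧ ∃ y : ℕ → E, (∀ k, y k ∈ A ∧ y k ≠ x) ∧
    Tendsto y atTop (𝓝 x) ∧
    Tendsto (fun k => (‖y k - x‖)⁻¹ • (y k - x)) atTop (𝓝 d)

/-- `A` has a tangent line at `x`: the set of limit directions of `A` at `x` is `{v, -v}`
for some unit vector `v`. -/
def HasTangentLineAt {E : Type*} [NormedAddCommGroup E] [NormedSpace ℝ E]
    (A : Set E) (x : E) : Prop :=
  ∃ v : E, ‖v‖ = 1 ∧ {d | IsLimitDirection A x d} = {v, -v}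

/-- Lower scaled oscillation of `f` at `x`, where `f` is regarded as a map defined on the
metric space `A`:  `liminf_{r→0+} (sup_{y ∈ A, dist x y ≤ r} ‖f y - f x‖) / r`. -/
def lOscOn {E F : Type*} [PseudoMetricSpace E] [NormedAddCommGroup F]
    (f : E → F) (A : Set E) (x : E) : ℝ≥0∞ :=
  Filter.liminf
    (fun r : ℝ => (⨆ y ∈ {y ∈ A | dist x y ≤ r}, (‖f y - f x‖₊ : ℝ≥0∞)) / ENNReal.ofReal r)
    (𝓝[>] (0:ℝ))

/-- Upper scaled oscillation of `f` at `x`, where `f` is regarded as a map defined on the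
metric space `A`:  `limsup_{r→0+} (sup_{y ∈ A, dist x y ≤ r} ‖f y - f x‖) / r`. -/
def uOscOn {E F : Type*} [PseudoMetricSpace E] [NormedAddCommGroup F]
    (f : E → F) (A : Set E) (x : E) : ℝ≥0∞ :=
  Filter.limsup
    (fun r : ℝ => (⨆ y ∈ {y ∈ A | dist x y ≤ r}, (‖f y - f x‖₊ : ℝ≥0∞)) / ENNReal.ofReal r)
    (𝓝[>] (0:ℝ))

/-- The closed unit cube `[0,1]^n` in `ℝ^n`. -/
def unitCube (n : ℕ) : Set (EuclideanSpace ℝ (Fin n)) :=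
  {x | ∀ i, x i ∈ Set.Icc (0:ℝ) 1}

/-- A set has σ-finite `s`-dimensional Hausdorff measure if it is a countable union of
sets of finite `H^s` measure. -/
def SigmaFiniteH {E : Type*} [EMetricSpace E] [MeasurableSpace E] [BorelSpace E]
    (s : ℝ) (C : Set E) : Prop :=
  ∃ F : ℕ → Set E, C = ⋃ k, F k ∧ ∀ k, μH[s] (F k) < ⊤

/-- The Hausdorff measure associated to a gauge function `g`. -/
def gaugeHausdorff {E : Type*} [EMetricSpace E] [MeasurableSpace E] [BorelSpace E]
    (g : ℝ → ℝ) : Measure E :=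
  Measure.mkMetric (fun d : ℝ≥0∞ => ENNReal.ofReal (g d.toReal))

/-- The hyperplane through `x` with normal vector `θ`. -/
def hyperplaneThrough {E : Type*} [NormedAddCommGroup E] [InnerProductSpace ℝ E]
    (θ x : E) : Set E := {y | ⟪y - x, θ⟫ = 0}

/-- `x` is an isolated point of `A`. -/
def IsIsolatedIn {E : Type*} [PseudoMetricSpace E] (x : E) (A : Set E) : Prop :=
  x ∈ A ∧ ∃ r > 0, A ∩ Metric.ball x r = {x}

/-- Concatenation of two Euclidean vectors as a point of `ℝ^{n+m}`. -/
def concatPt {n m : ℕ} (x : EuclideanSpace ℝ (Fin n)) (y : EuclideanSpace ℝ (Fin m)) :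
    EuclideanSpace ℝ (Fin (n + m)) :=
  (EuclideanSpace.equiv (Fin (n + m)) ℝ).symm (Fin.append (fun i => x i) (fun j => y j))

/-- A point of `ℝ^{n+1}` given by a vector in `ℝ^n` and a last (vertical) coordinate. -/
def snocPt {n : ℕ} (x : EuclideanSpace ℝ (Fin n)) (t : ℝ) :
    EuclideanSpace ℝ (Fin (n + 1)) :=
  (EuclideanSpace.equiv (Fin (n + 1)) ℝ).symm (Fin.snoc (fun i => x i) t)

namespace Stmt7

set_option linter.unusedSectionVars false
set_option linter.unusedVariables false

/-- half-open dyadic interval of scale `2^j` -/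
def D (j k : ℤ) : Set ℝ := Set.Ico ((k:ℝ) * 2^j) ((k+1) * 2^j)

lemma two_zpow_pos (j : ℤ) : (0:ℝ) < 2^j := zpow_pos two_pos j

lemma D_nonempty (j k : ℤ) : (D j k).Nonempty := by
  refine ⟨(k:ℝ) * 2^j, ?_⟩
  exact ⟨le_refl _, by nlinarith [two_zpow_pos j]⟩

lemma ediam_D (j k : ℤ) : Metric.ediam (D j k) = ENNReal.ofReal ((2:ℝ)^j) := by
  rw [D, Real.ediam_Ico]; ring_nf

lemma D_subset_of_le {j j' k k' : ℤ} (h : j ≤ j') {x : ℝ}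
    (hx : x ∈ D j k) (hx' : x ∈ D j' k') : D j k ⊆ D j' k' := by
  obtain ⟨h1, h2⟩ := hx
  obtain ⟨h1', h2'⟩ := hx'
  set a : ℕ := (j' - j).toNat with ha
  have hj' : j' = j + (a:ℤ) := by rw [ha]; omega
  have h2a : (2:ℝ)^j' = 2^(a:ℕ) * 2^j := by
    rw [hj', zpow_add₀ (two_ne_zero), mul_comm, zpow_natCast]
  have key1 : ((k' * 2^a : ℤ):ℝ) ≤ k := by
    have hle : ((k' * 2^a : ℤ):ℝ) * 2^j ≤ x := by push_cast; rw [mul_assoc, ← h2a]; exact h1'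
    have hlt : ((k' * 2^a : ℤ):ℝ) * 2^j < ((k:ℝ)+1) * 2^j := lt_of_le_of_lt hle h2
    have := lt_of_mul_lt_mul_right hlt (two_zpow_pos j).le
    have : (k' * 2^a : ℤ) < k + 1 := by exact_mod_cast this
    exact_mod_cast (by omega : (k' * 2^a : ℤ) ≤ k)
  have key2 : ((k:ℝ)+1) ≤ (((k'+1) * 2^a : ℤ):ℝ) := by
    have hlt : (k:ℝ) * 2^j < (((k'+1) * 2^a : ℤ):ℝ) * 2^j := by
      refine lt_of_le_of_lt h1 ?_
      push_cast; rw [mul_assoc, ← h2a]; exact h2'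
    have := lt_of_mul_lt_mul_right hlt (two_zpow_pos j).le
    have h3 : (k:ℤ) < (k'+1) * 2^a := by exact_mod_cast this
    exact_mod_cast (by omega : (k:ℤ) + 1 ≤ (k'+1) * 2^a)
  apply Set.Ico_subset_Ico
  · have hk1 : ((k' * 2^a : ℤ):ℝ) * 2^j ≤ (k:ℝ) * 2^j :=
      mul_le_mul_of_nonneg_right key1 (two_zpow_pos j).le
    push_cast [h2a] at hk1 ⊢
    nlinarith
  · have hk2 : ((k:ℝ)+1) * 2^j ≤ (((k'+1) * 2^a : ℤ):ℝ) * 2^j :=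
      mul_le_mul_of_nonneg_right key2 (two_zpow_pos j).le
    push_cast [h2a] at hk2 ⊢
    nlinarith

lemma D_comparable {j j' k k' : ℤ} {x : ℝ} (hx : x ∈ D j k) (hx' : x ∈ D j' k') :
    D j k ⊆ D j' k' ∨ D j' k' ⊆ D j k := by
  rcases le_total j j' with h | h
  · exact Or.inl (D_subset_of_le h hx hx')
  · exact Or.inr (D_subset_of_le h hx' hx)

lemma D_eq_of_same_scale {j k k' : ℤ} {x : ℝ} (hx : x ∈ D j k) (hx' : x ∈ D j k') : k = k' := by
  obtain ⟨h1, h2⟩ := hx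
  obtain ⟨h1', h2'⟩ := hx'
  have a1 : (k:ℝ) < (k':ℝ)+1 := lt_of_mul_lt_mul_right (lt_of_le_of_lt h1 h2') (two_zpow_pos j).le
  have a2 : (k':ℝ) < (k:ℝ)+1 := lt_of_mul_lt_mul_right (lt_of_le_of_lt h1' h2) (two_zpow_pos j).le
  have b1 : (k:ℤ) < k' + 1 := by exact_mod_cast a1
  have b2 : (k':ℤ) < k + 1 := by exact_mod_cast a2
  omega

lemma D_inj {j j' k k' : ℤ} (h : D j k = D j' k') : j = j' ∧ k = k' := by
  have hj : j = j' := by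
    have := congrArg Metric.ediam h
    rw [ediam_D, ediam_D] at this
    have h2 : (2:ℝ)^j = 2^j' := by
      have := (ENNReal.ofReal_eq_ofReal_iff (two_zpow_pos j).le (two_zpow_pos j').le).mp this
      exact this
    exact_mod_cast zpow_right_injective₀ (by norm_num) (by norm_num) h2
  subst hj
  have hx : (k:ℝ) * 2^j ∈ D j k := ⟨le_refl _, by nlinarith [two_zpow_pos j]⟩
  have hx' : (k:ℝ) * 2^j ∈ D j k' := h ▸ hx
  exact ⟨rfl, D_eq_of_same_scale hx hx'⟩


lemma tsum_pair (f : ℕ → ℝ≥0∞) : ∑' i, f i = ∑' k, (f (2*k) + f (2*k+1)) := by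
  rw [← (Equiv.boolProdNatEquivNat).tsum_eq f, ENNReal.tsum_prod', tsum_bool,
    ← ENNReal.tsum_add]
  apply tsum_congr
  intro k
  simp [Equiv.boolProdNatEquivNat, Nat.bit]

set_option linter.unusedSectionVars false

variable {X : Type*} [EMetricSpace X] [MeasurableSpace X] [BorelSpace X]

/-- inner infimum in the definition of Hausdorff measure, at scale `r` -/
noncomputable def nb (s : ℝ) (B : Set X) (r : ℝ≥0∞) : ℝ≥0∞ :=
  ⨅ (t : ℕ → Set X) (_ : B ⊆ ⋃ n, t n) (_ : ∀ n, Metric.ediam (t n) ≤ r),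
    ∑' n, ⨆ _ : (t n).Nonempty, Metric.ediam (t n) ^ s

lemma hausdorff_eq_iSup_nb (s : ℝ) (B : Set X) :
    μH[s] B = ⨆ (r : ℝ≥0∞) (_ : 0 < r), nb s B r := by
  rw [MeasureTheory.Measure.hausdorffMeasure_apply]; rfl

lemma nb_le_cover {s : ℝ} {B : Set X} {r : ℝ≥0∞} (t : ℕ → Set X)
    (hc : B ⊆ ⋃ n, t n) (hd : ∀ n, Metric.ediam (t n) ≤ r) :
    nb s B r ≤ ∑' n, ⨆ _ : (t n).Nonempty, Metric.ediam (t n) ^ s := by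
  exact iInf₂_le_of_le t hc (iInf_le_of_le hd (le_refl _))

lemma nb_le_hausdorff {s : ℝ} {B : Set X} {r : ℝ≥0∞} (hr : 0 < r) :
    nb s B r ≤ μH[s] B := by
  rw [hausdorff_eq_iSup_nb]
  exact le_iSup₂_of_le r hr (le_refl _)

/-- removing a countable set from `B` does not decrease the value needed: covers of `B \ Z`
can be upgraded to covers of `B` at no cost, when `s > 0`. -/
lemma nb_le_diff {s : ℝ} (hs : 0 < s) {B Z : Set X} (hZ : Z.Countable) (r : ℝ≥0∞) :
    nb s B r ≤ nb s (B \ Z) r := by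
  rcases Z.eq_empty_or_nonempty with rfl | hZne
  · simp only [diff_empty]; exact le_refl _
  obtain ⟨z, hz⟩ := Set.Countable.exists_eq_range hZ hZne
  -- for every cover t of B \ Z, produce cover of B
  refine le_iInf fun t => le_iInf fun hc => le_iInf fun hd => ?_
  set u : ℕ → Set X := fun n => if n % 2 = 0 then t (n / 2) else {z (n / 2)} with hu
  have hucov : B ⊆ ⋃ n, u n := by
    intro x hx
    by_cases hxZ : x ∈ Z
    · rw [hz] at hxZ
      obtain ⟨k, hk⟩ := hxZ
      refine Set.mem_iUnion.mpr ⟨2*k+1, ?_⟩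
      have hm : (2*k+1) % 2 = 1 := by omega
      have hd2 : (2*k+1) / 2 = k := by omega
      simp [hu, hm, hd2, hk]
    · obtain ⟨k, hk⟩ := Set.mem_iUnion.mp (hc ⟨hx, hxZ⟩)
      refine Set.mem_iUnion.mpr ⟨2*k, ?_⟩
      simpa [hu, Nat.mul_mod_right] using hk
  have hud : ∀ n, Metric.ediam (u n) ≤ r := by
    intro n
    by_cases h : n % 2 = 0
    · simpa [hu, h] using hd _
    · simp [hu, h]
  refine le_trans (nb_le_cover u hucov hud) ?_
  rw [tsum_pair (fun n => ⨆ _ : (u n).Nonempty, Metric.ediam (u n) ^ s)]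
  apply ENNReal.tsum_le_tsum
  intro k
  have h1 : u (2*k) = t k := by simp [hu, Nat.mul_mod_right]
  have h2 : u (2*k+1) = {z k} := by
    have hm : (2*k+1) % 2 = 1 := by omega
    have hd2 : (2*k+1) / 2 = k := by omega
    simp [hu, hm, hd2]
  rw [h1, h2]
  simp [EMetric.diam_singleton, ENNReal.zero_rpow_of_pos hs]


/-- Key combinatorial lemma: a countable family of dyadic intervals covering `B` with
multiplicity at least `m` has `∑ len^s ≥ m · nb s B r`. -/
lemma dyadic_mult (s : ℝ) (r : ℝ≥0∞) (jb : ℤ) :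
    ∀ (m : ℕ) (J K : ℕ → ℤ) (act : Set ℕ),
      (∀ i ∈ act, J i ≤ jb) →
      (∀ i ∈ act, ENNReal.ofReal ((2:ℝ)^(J i)) ≤ r) →
      ∀ (B : Set ℝ),
      (∀ t ∈ B, ∃ F : Finset ℕ, m ≤ F.card ∧ ∀ i ∈ F, i ∈ act ∧ t ∈ D (J i) (K i)) →
      (m : ℝ≥0∞) * nb s B r ≤
        ∑' i, Set.indicator act (fun i => ENNReal.ofReal ((2:ℝ)^(J i)) ^ s) i := by
  intro m
  induction m with
  | zero => intro J K act _ _ B _; simp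
  | succ m ih =>
    intro J K act hJ hlen B hm
    classical
    -- the set of "chosen" indices: maximal dyadic intervals, least index per interval
    set G : Set ℕ := {i | i ∈ act ∧ (∀ i' ∈ act, ¬ (D (J i) (K i) ⊂ D (J i') (K i'))) ∧
      ∀ i' < i, ¬(i' ∈ act ∧ J i' = J i ∧ K i' = K i ∧
        (∀ i'' ∈ act, ¬ (D (J i') (K i') ⊂ D (J i'') (K i''))))} with hG
    have hGact : G ⊆ act := fun i hi => hi.1
    -- Claim A : G covers B
    have claimA : ∀ t ∈ B, ∃ i ∈ G, t ∈ D (J i) (K i) := by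
      intro t ht
      obtain ⟨F, hFcard, hF⟩ := hm t ht
      have hFne : ∃ i, i ∈ act ∧ t ∈ D (J i) (K i) := by
        obtain ⟨i, hi⟩ := Finset.card_pos.mp (lt_of_lt_of_le (Nat.succ_pos m) hFcard)
        exact ⟨i, (hF i hi).1, (hF i hi).2⟩
      -- maximal scale containing t
      obtain ⟨jmax, hjmaxP, hjmaxU⟩ := Int.exists_greatest_of_bdd
        (P := fun j => ∃ i, i ∈ act ∧ t ∈ D (J i) (K i) ∧ J i = j)
        ⟨jb, fun z ⟨i, hi, _, hji⟩ => hji ▸ hJ i hi⟩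
        (let ⟨i, hi, hti⟩ := hFne; ⟨J i, i, hi, hti, rfl⟩)
      set T : Set ℕ := {i | i ∈ act ∧ t ∈ D (J i) (K i) ∧ J i = jmax} with hT
      have hTne : T.Nonempty := hjmaxP
      set i0 := sInf T with hi0
      have hi0T : i0 ∈ T := Nat.sInf_mem hTne
      have hmaximal : ∀ i' ∈ act, ¬ (D (J i0) (K i0) ⊂ D (J i') (K i')) := by
        intro i' hi' hss
        have ht' : t ∈ D (J i') (K i') := hss.1 hi0T.2.1
        have hle : J i' ≤ jmax := hjmaxU _ ⟨i', hi', ht', rfl⟩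
        -- then D (J i') ⊆ D (J i0) since J i' ≤ jmax = J i0
        have : D (J i') (K i') ⊆ D (J i0) (K i0) :=
          D_subset_of_le (by rw [hi0T.2.2]; exact hle) ht' hi0T.2.1
        exact (hss.2 this).elim
      refine ⟨i0, ⟨hi0T.1, hmaximal, ?_⟩, hi0T.2.1⟩
      intro i' hi'lt ⟨hi'act, hJeq, hKeq, _⟩
      -- i' would be an earlier member of T
      have : i' ∈ T := ⟨hi'act, by rw [hJeq, hKeq]; exact hi0T.2.1, by rw [hJeq]; exact hi0T.2.2⟩
      exact absurd (Nat.sInf_le this) (by omega)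
    -- Claim B : multiplicity of G is ≤ 1 anywhere
    have claimB : ∀ (t : ℝ) (i1 i2 : ℕ), i1 ∈ G → i2 ∈ G →
        t ∈ D (J i1) (K i1) → t ∈ D (J i2) (K i2) → i1 = i2 := by
      intro t i1 i2 h1 h2 ht1 ht2
      have hsets : D (J i1) (K i1) = D (J i2) (K i2) := by
        rcases D_comparable ht1 ht2 with h | h
        · rcases eq_or_ne (D (J i1) (K i1)) (D (J i2) (K i2)) with he | hne
          · exact he
          · exact absurd (HasSubset.Subset.ssubset_of_ne h hne) (h1.2.1 i2 h2.1)
        · rcases eq_or_ne (D (J i2) (K i2)) (D (J i1) (K i1)) with he | hne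
          · exact he.symm
          · exact absurd (HasSubset.Subset.ssubset_of_ne h hne) (h2.2.1 i1 h1.1)
      obtain ⟨hJ12, hK12⟩ := D_inj hsets
      rcases lt_trichotomy i1 i2 with h | h | h
      · exact absurd ⟨h1.1, hJ12, hK12, h1.2.1⟩ (h2.2.2 i1 h)
      · exact h
      · exact absurd ⟨h2.1, hJ12.symm, hK12.symm, h2.2.1⟩ (h1.2.2 i2 h)
    -- split the sum
    have hsplit : ∑' i, Set.indicator act (fun i => ENNReal.ofReal ((2:ℝ)^(J i)) ^ s) i =
        (∑' i, Set.indicator G (fun i => ENNReal.ofReal ((2:ℝ)^(J i)) ^ s) i) +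
        ∑' i, Set.indicator (act \ G) (fun i => ENNReal.ofReal ((2:ℝ)^(J i)) ^ s) i := by
      rw [← ENNReal.tsum_add]
      apply tsum_congr
      intro i
      by_cases hiG : i ∈ G
      · simp [Set.indicator_of_mem hiG, Set.indicator_of_mem (hGact hiG),
          Set.indicator_of_notMem (fun h : i ∈ act \ G => h.2 hiG)]
      · by_cases hia : i ∈ act
        · simp [Set.indicator_of_mem hia, Set.indicator_of_notMem hiG,
            Set.indicator_of_mem (Set.mem_diff_of_mem hia hiG)]
        · simp [Set.indicator_of_notMem hia, Set.indicator_of_notMem hiG,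
            Set.indicator_of_notMem (fun h : i ∈ act \ G => hia h.1)]
    -- nb ≤ sum over G
    have hnbG : nb s B r ≤
        ∑' i, Set.indicator G (fun i => ENNReal.ofReal ((2:ℝ)^(J i)) ^ s) i := by
      set u : ℕ → Set ℝ := fun i => if i ∈ G then D (J i) (K i) else ∅ with hu
      have hcov : B ⊆ ⋃ i, u i := by
        intro t ht
        obtain ⟨i, hiG, hti⟩ := claimA t ht
        exact Set.mem_iUnion.mpr ⟨i, by simp [hu, hiG, hti]⟩
      have hdm : ∀ i, Metric.ediam (u i) ≤ r := by
        intro i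
        by_cases hiG : i ∈ G
        · simp only [hu, if_pos hiG, ediam_D]
          exact hlen i (hGact hiG)
        · simp [hu, if_neg hiG]
      refine le_trans (nb_le_cover u hcov hdm) (le_of_eq (tsum_congr fun i => ?_))
      by_cases hiG : i ∈ G
      · simp only [hu, if_pos hiG, ediam_D, Set.indicator_of_mem hiG]
        exact iSup_pos (D_nonempty _ _)
      · simp [hu, if_neg hiG, Set.indicator_of_notMem hiG]
    -- induction applied to act \ G
    have hind : (m : ℝ≥0∞) * nb s B r ≤
        ∑' i, Set.indicator (act \ G) (fun i => ENNReal.ofReal ((2:ℝ)^(J i)) ^ s) i := by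
      apply ih J K (act \ G) (fun i hi => hJ i hi.1) (fun i hi => hlen i hi.1) B
      intro t ht
      obtain ⟨F, hFcard, hF⟩ := hm t ht
      refine ⟨F.filter (· ∉ G), ?_, ?_⟩
      · -- at most one element of F is in G
        have hsub : F.filter (· ∈ G) ⊆ F := Finset.filter_subset _ _
        have hcard1 : (F.filter (· ∈ G)).card ≤ 1 := by
          refine Finset.card_le_one.mpr fun a ha b hb => ?_
          simp only [Finset.mem_filter] at ha hb
          exact claimB t a b ha.2 hb.2 (hF a ha.1).2 (hF b hb.1).2
        have := Finset.card_filter_add_card_filter_not (s := F) (· ∈ G)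
        omega
      · intro i hi
        simp only [Finset.mem_filter] at hi
        exact ⟨⟨(hF i hi.1).1, hi.2⟩, (hF i hi.1).2⟩
    calc ((m+1 : ℕ) : ℝ≥0∞) * nb s B r = (m : ℝ≥0∞) * nb s B r + nb s B r := by
          push_cast; ring
      _ ≤ (∑' i, Set.indicator (act \ G) (fun i => ENNReal.ofReal ((2:ℝ)^(J i)) ^ s) i) +
          ∑' i, Set.indicator G (fun i => ENNReal.ofReal ((2:ℝ)^(J i)) ^ s) i :=
          add_le_add hind hnbG
      _ = _ := by rw [hsplit]; ring


lemma exists_sep {X : Type*} [MetricSpace X] (F : Finset X) :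
    ∃ n : ℕ, ∀ y ∈ F, ∀ z ∈ F, y ≠ z → 1/(n+1 : ℝ) ≤ dist y z := by
  classical
  by_cases hP : ((F ×ˢ F).filter fun p => p.1 ≠ p.2).Nonempty
  · have hδ0pos : 0 < ((F ×ˢ F).filter fun p => p.1 ≠ p.2).inf' hP
        fun p => dist p.1 p.2 := by
      rw [Finset.lt_inf'_iff]
      intro p hp
      exact dist_pos.mpr (Finset.mem_filter.mp hp).2
    obtain ⟨n0, hn0⟩ := exists_nat_one_div_lt hδ0pos
    refine ⟨n0, fun y hy z hz hne => ?_⟩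
    refine le_trans hn0.le (Finset.inf'_le (b := (y,z)) _ ?_)
    exact Finset.mem_filter.mpr ⟨Finset.mem_product.mpr ⟨hy, hz⟩, hne⟩
  · refine ⟨0, fun y hy z hz hne => ?_⟩
    exact absurd ⟨(y,z), Finset.mem_filter.mpr ⟨Finset.mem_product.mpr ⟨hy, hz⟩, hne⟩⟩ hP

lemma exists_finset_of_h0 {X : Type*} [EMetricSpace X] [MeasurableSpace X] [BorelSpace X]
    {S : Set X} {c : ℝ} (hc : 0 < c) (h : ENNReal.ofReal c < μH[0] S) :
    ∃ F : Finset X, F.card = Nat.ceil c ∧ ∀ y ∈ F, y ∈ S := by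
  classical
  by_cases hfin : S.Finite
  · have hcard : μH[0] S ≤ (hfin.toFinset.card : ℝ≥0∞) := by
      have hS : S = ⋃ x ∈ hfin.toFinset, {x} := by
        ext y; simp [hfin.mem_toFinset]
      calc μH[0] S ≤ ∑ x ∈ hfin.toFinset, μH[0] ({x} : Set X) := by
            nth_rewrite 1 [hS]; exact measure_biUnion_finset_le _ _
        _ = hfin.toFinset.card := by
            simp [Measure.hausdorffMeasure_zero_singleton]
    have hlt : ENNReal.ofReal c < (hfin.toFinset.card : ℝ≥0∞) := lt_of_lt_of_le h hcard
    have hc2 : c < (hfin.toFinset.card : ℝ) := by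
      by_contra hcon
      push_neg at hcon
      have : ((hfin.toFinset.card : ℕ) : ℝ≥0∞) ≤ ENNReal.ofReal c := by
        rw [← ENNReal.ofReal_natCast]
        exact ENNReal.ofReal_le_ofReal hcon
      exact absurd this (not_le.mpr hlt)
    have hm : Nat.ceil c ≤ hfin.toFinset.card := Nat.ceil_le.mpr hc2.le
    obtain ⟨F, hFsub, hFcard⟩ := Finset.exists_subset_card_eq hm
    exact ⟨F, hFcard, fun y hy => hfin.mem_toFinset.mp (hFsub hy)⟩
  · have hinf : S.Infinite := hfin
    obtain ⟨T, hTsub, hTfin, hTcard⟩ := hinf.exists_subset_ncard_eq (Nat.ceil c)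
    refine ⟨hTfin.toFinset, ?_, fun y hy => hTsub (hTfin.mem_toFinset.mp hy)⟩
    rw [← hTcard, Set.ncard_eq_toFinset_card T hTfin]

lemma coord_lip (d : ℕ) (i : Fin d) :
    LipschitzWith 1 (fun y : EuclideanSpace ℝ (Fin d) => y i) := by
  have h1 := PiLp.lipschitzWith_ofLp 2 (fun _ : Fin d => ℝ)
  have h2 : LipschitzWith 1 (fun f : Fin d → ℝ => f i) := LipschitzWith.eval i
  have h3 := h2.comp h1
  rw [one_mul] at h3
  exact h3


end Stmt7

set_option maxHeartbeats 2000000 in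
/-- (Falconer's slicing lower bound) For `d ≥ 1`, `s > 0` there is `b > 0`,
depending only on `s` and `d`, such that if each slice `{y ∈ E : y₁ = t}`, `t ∈ A`, has
`H^0` measure (cardinality) greater than `c`, then `H^s(E) ≥ b c H^s(A)`. -/
theorem stmt_7 (d : ℕ) (hd : 1 ≤ d) (s : ℝ) (hs : 0 < s) :
    ∃ b : ℝ, 0 < b ∧
      ∀ (E : Set (EuclideanSpace ℝ (Fin d))) (c : ℝ) (A : Set ℝ), 0 < c →
        (∀ t ∈ A, ENNReal.ofReal c < μH[0] {y ∈ E | y ⟨0, hd⟩ = t}) →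
        ENNReal.ofReal (b * c) * μH[s] A ≤ μH[s] E := by
  classical
  refine ⟨(2:ℝ)^(-(1+s)), Real.rpow_pos_of_pos two_pos _, ?_⟩
  intro E c A hc hslice
  set π : EuclideanSpace ℝ (Fin d) → ℝ := fun y => y ⟨0, hd⟩ with hπdef
  have hπ : LipschitzWith 1 π := Stmt7.coord_lip d ⟨0, hd⟩
  set m : ℕ := Nat.ceil c with hmdef
  have hcm : c ≤ (m:ℝ) := Nat.le_ceil c
  have hpts : ∀ t ∈ A, ∃ F : Finset (EuclideanSpace ℝ (Fin d)),
      F.card = m ∧ ∀ y ∈ F, y ∈ E ∧ π y = t := by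
    intro t ht
    obtain ⟨F, hFcard, hFsub⟩ := Stmt7.exists_finset_of_h0 hc (hslice t ht)
    exact ⟨F, hFcard, fun y hy => hFsub y hy⟩
  set An : ℕ → Set ℝ := fun n => {t | t ∈ A ∧ ∃ F : Finset (EuclideanSpace ℝ (Fin d)),
    F.card = m ∧ (∀ y ∈ F, y ∈ E ∧ π y = t) ∧
    ∀ y ∈ F, ∀ z ∈ F, y ≠ z → 1/(n+1 : ℝ) ≤ dist y z} with hAndef
  have hAnA : ∀ n, An n ⊆ A := fun n t ht => ht.1
  have hAnmono : Monotone An := by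
    apply monotone_nat_of_le_succ
    intro n t ht
    obtain ⟨htA, F, h1, h2, h3⟩ := ht
    refine ⟨htA, F, h1, h2, fun y hy z hz hne => le_trans ?_ (h3 y hy z hz hne)⟩
    apply one_div_le_one_div_of_le
    · positivity
    · push_cast; linarith
  have hAun : A = ⋃ n, An n := by
    apply Set.Subset.antisymm
    · intro t ht
      obtain ⟨F, hFc, hFm⟩ := hpts t ht
      obtain ⟨n0, hn0⟩ := Stmt7.exists_sep F
      exact Set.mem_iUnion.mpr ⟨n0, ht, F, hFc, hFm, hn0⟩
    · exact Set.iUnion_subset hAnA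
  rw [hAun, hAnmono.measure_iUnion, ENNReal.mul_iSup]
  refine iSup_le fun n => ?_
  set ε : ℝ := 1/(n+1 : ℝ) with hεdef
  have hεpos : 0 < ε := by positivity
  rw [Stmt7.hausdorff_eq_iSup_nb, ENNReal.mul_iSup]
  refine iSup_le fun r => ?_
  rw [ENNReal.mul_iSup]
  refine iSup_le fun hr => ?_
  set δ : ℝ := min (ε/3) (if r = ⊤ then 1 else r.toReal/3) with hδdef
  have hδpos : 0 < δ := by
    apply lt_min (by positivity)
    split_ifs with h
    · norm_num
    · have := ENNReal.toReal_pos hr.ne' h; linarith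
  have hδε3 : δ ≤ ε/3 := min_le_left _ _
  have hδr : ENNReal.ofReal (2*δ) ≤ r := by
    by_cases hrt : r = ⊤
    · simp [hrt]
    · have h3 : δ ≤ r.toReal/3 := by
        rw [hδdef, if_neg hrt]; exact min_le_right _ _
      calc ENNReal.ofReal (2*δ) ≤ ENNReal.ofReal r.toReal :=
            ENNReal.ofReal_le_ofReal (by linarith [ENNReal.toReal_nonneg (a := r)])
        _ = r := ENNReal.ofReal_toReal hrt
  refine le_trans ?_ (Stmt7.nb_le_hausdorff (s := s) (B := E)
    (r := ENNReal.ofReal δ) (ENNReal.ofReal_pos.mpr hδpos))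
  rw [Stmt7.nb]
  refine le_iInf fun t => le_iInf fun hcov => le_iInf fun hdm => ?_
  set Z : Set ℝ := ⋃ k ∈ {k : ℕ | Metric.ediam (t k) = 0}, π '' (t k) with hZdef
  have hZc : Z.Countable := by
    apply Set.Countable.biUnion (Set.to_countable _)
    intro k hk
    exact ((EMetric.diam_eq_zero_iff.mp hk).image π).countable
  set rk : ℕ → ℝ := fun k => (Metric.ediam (t k)).toReal with hrkdef
  set jf : ℕ → ℤ := fun k => ⌈Real.logb 2 (rk k)⌉ with hjfdef
  set lk : ℕ → ℝ := fun k => (2:ℝ)^(jf k) with hlkdef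
  set af : ℕ → ℝ := fun k => sInf (π '' (t k)) with hafdef
  set Kf : ℕ → ℤ := fun k => ⌊af k / lk k⌋ with hKfdef
  set act : Set ℕ := {i | (t (i/2)).Nonempty ∧ Metric.ediam (t (i/2)) ≠ 0} with hactdef
  set J : ℕ → ℤ := fun i => jf (i/2) with hJdef
  set K : ℕ → ℤ := fun i => Kf (i/2) + ((i % 2 : ℕ) : ℤ) with hKdef
  set jb : ℤ := ⌈Real.logb 2 δ⌉ with hjbdef
  have hdiam_ne_top : ∀ k, Metric.ediam (t k) ≠ ⊤ :=
    fun k => ne_top_of_le_ne_top ENNReal.ofReal_ne_top (hdm k)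
  have hrk_le : ∀ k, rk k ≤ δ := fun k =>
    ENNReal.toReal_le_of_le_ofReal hδpos.le (hdm k)
  have hrk_pos : ∀ k, Metric.ediam (t k) ≠ 0 → 0 < rk k := fun k h =>
    ENNReal.toReal_pos h (hdiam_ne_top k)
  have hlk_pos : ∀ k, 0 < lk k := fun k => zpow_pos two_pos _
  have hlk_ge : ∀ k, Metric.ediam (t k) ≠ 0 → rk k ≤ lk k := by
    intro k h
    calc rk k = (2:ℝ) ^ (Real.logb 2 (rk k)) :=
          (Real.rpow_logb two_pos (by norm_num) (hrk_pos k h)).symm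
      _ ≤ (2:ℝ) ^ ((jf k : ℝ)) :=
          (Real.rpow_le_rpow_left_iff one_lt_two).mpr (Int.le_ceil _)
      _ = lk k := Real.rpow_intCast 2 (jf k)
  have hlk_lt : ∀ k, Metric.ediam (t k) ≠ 0 → lk k < 2 * rk k := by
    intro k h
    have h1 : ((jf k : ℝ)) < Real.logb 2 (rk k) + 1 := Int.ceil_lt_add_one _
    calc lk k = (2:ℝ) ^ ((jf k:ℝ)) := (Real.rpow_intCast 2 (jf k)).symm
      _ < (2:ℝ) ^ (Real.logb 2 (rk k) + 1) :=
          (Real.rpow_lt_rpow_left_iff one_lt_two).mpr h1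
      _ = 2 * rk k := by
          rw [Real.rpow_add two_pos, Real.rpow_one,
            Real.rpow_logb two_pos (by norm_num) (hrk_pos k h)]
          ring
  have hjf_le : ∀ k, Metric.ediam (t k) ≠ 0 → jf k ≤ jb := fun k h =>
    Int.ceil_le_ceil (Real.logb_le_logb_of_le one_lt_two (hrk_pos k h) (hrk_le k))
  have hgeom : ∀ k, (t k).Nonempty → Metric.ediam (t k) ≠ 0 →
      π '' (t k) ⊆ Stmt7.D (jf k) (Kf k) ∪ Stmt7.D (jf k) (Kf k + 1) := by
    intro k hne h0
    have hediam_im : Metric.ediam (π '' (t k)) ≤ Metric.ediam (t k) := by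
      simpa using hπ.ediam_image_le (t k)
    have hbd : Bornology.IsBounded (π '' (t k)) := by
      rw [Metric.isBounded_iff_ediam_ne_top]
      exact ne_top_of_le_ne_top (hdiam_ne_top k) hediam_im
    have hbdd : BddBelow (π '' (t k)) := hbd.bddBelow
    have hPine : (π '' (t k)).Nonempty := hne.image π
    intro x hx
    have hax : af k ≤ x := csInf_le hbdd hx
    have hxa : x ≤ af k + rk k := by
      have hdy : ∀ y ∈ π '' (t k), x - rk k ≤ y := by
        intro y hy
        have hed : edist x y ≤ Metric.ediam (t k) :=
          le_trans (EMetric.edist_le_diam_of_mem hx hy) hediam_im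
        rw [edist_dist] at hed
        have hdxy : dist x y ≤ rk k :=
          (ENNReal.ofReal_le_iff_le_toReal (hdiam_ne_top k)).mp hed
        have := le_of_abs_le (le_of_eq (Real.dist_eq x y).symm |>.trans hdxy)
        linarith
      have : x - rk k ≤ af k := le_csInf hPine hdy
      linarith
    have hfl1 : (Kf k : ℝ) * lk k ≤ af k := by
      have h1 : ((Kf k : ℤ) : ℝ) ≤ af k / lk k := Int.floor_le _
      calc (Kf k : ℝ) * lk k ≤ (af k / lk k) * lk k :=
            mul_le_mul_of_nonneg_right h1 (hlk_pos k).le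
        _ = af k := div_mul_cancel₀ _ (hlk_pos k).ne'
    have hfl2 : af k < ((Kf k : ℝ) + 1) * lk k := by
      have h1 : af k / lk k < (Kf k : ℝ) + 1 := Int.lt_floor_add_one _
      calc af k = (af k / lk k) * lk k := (div_mul_cancel₀ _ (hlk_pos k).ne').symm
        _ < ((Kf k : ℝ) + 1) * lk k :=
            mul_lt_mul_of_pos_right h1 (hlk_pos k)
    have hxlt : x < ((Kf k : ℝ) + 2) * lk k := by
      have := hlk_ge k h0
      nlinarith [hlk_pos k]
    by_cases hcase : x < ((Kf k : ℝ) + 1) * lk k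
    · left
      exact ⟨le_trans hfl1 hax, by push_cast; exact hcase⟩
    · right
      push_neg at hcase
      refine ⟨by push_cast; exact hcase, by push_cast; linarith⟩
  have hmult : ∀ x ∈ (An n \ Z), ∃ F : Finset ℕ, m ≤ F.card ∧
      ∀ i ∈ F, i ∈ act ∧ x ∈ Stmt7.D (J i) (K i) := by
    intro x hx
    obtain ⟨⟨hxA, S, hScard, hSmem, hSsep⟩, hxZ⟩ := hx
    have hgex : ∀ y ∈ S, ∃ k, y ∈ t k := fun y hy => Set.mem_iUnion.mp (hcov (hSmem y hy).1)
    set g : EuclideanSpace ℝ (Fin d) → ℕ :=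
      fun y => if h : ∃ k, y ∈ t k then h.choose else 0 with hgdef
    have hgmem : ∀ y ∈ S, y ∈ t (g y) := by
      intro y hy
      have h := hgex y hy
      simp only [hgdef, dif_pos h]
      exact h.choose_spec
    have hact' : ∀ y ∈ S, (t (g y)).Nonempty ∧ Metric.ediam (t (g y)) ≠ 0 := by
      intro y hy
      refine ⟨⟨y, hgmem y hy⟩, fun h0 => hxZ ?_⟩
      rw [hZdef]
      refine Set.mem_biUnion h0 ?_
      exact ⟨y, hgmem y hy, (hSmem y hy).2⟩
    have hginj : ∀ y ∈ S, ∀ z ∈ S, g y = g z → y = z := by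
      intro y hy z hz hgyz
      by_contra hne
      have hsep := hSsep y hy z hz hne
      have hdyz : dist y z ≤ δ := by
        have hed : edist y z ≤ Metric.ediam (t (g y)) :=
          EMetric.edist_le_diam_of_mem (hgmem y hy) (hgyz ▸ hgmem z hz)
        rw [edist_dist] at hed
        exact le_trans ((ENNReal.ofReal_le_iff_le_toReal (hdiam_ne_top _)).mp hed) (hrk_le _)
      rw [← hεdef] at hsep
      linarith
    set a' : ℕ → ℕ := fun k => if x ∈ Stmt7.D (jf k) (Kf k) then 0 else 1 with ha'def
    have ha'le : ∀ k, a' k ≤ 1 := by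
      intro k
      by_cases h : x ∈ Stmt7.D (jf k) (Kf k) <;> simp [ha'def, h]
    refine ⟨S.image (fun y => 2 * g y + a' (g y)), ?_, ?_⟩
    · rw [Finset.card_image_of_injOn, hScard]
      intro y hy z hz h
      apply hginj y hy z hz
      have h1 := ha'le (g y)
      have h2 := ha'le (g z)
      dsimp only at h
      omega
    · intro i hi
      obtain ⟨y, hy, rfl⟩ := Finset.mem_image.mp hi
      have hk := hact' y hy
      have h1 := ha'le (g y)
      have hi2 : (2 * g y + a' (g y)) / 2 = g y := by omega
      have him : (2 * g y + a' (g y)) % 2 = a' (g y) := by omega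
      have hxim : x ∈ π '' (t (g y)) := ⟨y, hgmem y hy, (hSmem y hy).2⟩
      have hun := hgeom (g y) hk.1 hk.2 hxim
      constructor
      · show (t ((2 * g y + a' (g y))/2)).Nonempty ∧
          Metric.ediam (t ((2 * g y + a' (g y))/2)) ≠ 0
        rw [hi2]
        exact hk
      · show x ∈ Stmt7.D (jf ((2 * g y + a' (g y))/2))
          (Kf ((2 * g y + a' (g y))/2) + (((2 * g y + a' (g y)) % 2 : ℕ) : ℤ))
        rw [hi2, him]
        by_cases hc2 : x ∈ Stmt7.D (jf (g y)) (Kf (g y))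
        · have ha0 : a' (g y) = 0 := by simp [ha'def, hc2]
          rw [ha0]
          simpa using hc2
        · have hD1 : x ∈ Stmt7.D (jf (g y)) (Kf (g y) + 1) := hun.resolve_left hc2
          have ha1 : a' (g y) = 1 := by simp [ha'def, hc2]
          rw [ha1]
          simpa using hD1
  have hlen' : ∀ i ∈ act, ENNReal.ofReal ((2:ℝ)^(J i)) ≤ r := by
    intro i hi
    refine le_trans (ENNReal.ofReal_le_ofReal ?_) hδr
    calc (2:ℝ)^(J i) = lk (i/2) := rfl
      _ ≤ 2 * rk (i/2) := (hlk_lt _ hi.2).le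
      _ ≤ 2 * δ := by linarith [hrk_le (i/2)]
  have hmain := Stmt7.dyadic_mult s r jb m J K act
    (fun i hi => hjf_le (i/2) hi.2) hlen' (An n \ Z) hmult
  have hsum : (∑' i, Set.indicator act (fun i => ENNReal.ofReal ((2:ℝ)^(J i)) ^ s) i)
      ≤ (2:ℝ≥0∞)^(1+s) * ∑' k, ⨆ _ : (t k).Nonempty, Metric.ediam (t k) ^ s := by
    rw [Stmt7.tsum_pair, ← ENNReal.tsum_mul_left]
    apply ENNReal.tsum_le_tsum
    intro k
    have h2k : (2*k)/2 = k := by omega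
    have h2k1 : (2*k+1)/2 = k := by omega
    by_cases hk : (t k).Nonempty ∧ Metric.ediam (t k) ≠ 0
    · have hm1 : (2*k) ∈ act := by rw [hactdef]; simpa [h2k] using hk
      have hm2 : (2*k+1) ∈ act := by rw [hactdef]; simpa [h2k1] using hk
      have hval : ∀ i, i/2 = k → ENNReal.ofReal ((2:ℝ)^(J i)) ^ s ≤
          (2:ℝ≥0∞)^s * Metric.ediam (t k) ^ s := by
        intro i hik
        have hJik : J i = jf k := by rw [hJdef]; simp [hik]
        have hle : ENNReal.ofReal ((2:ℝ)^(J i)) ≤ 2 * Metric.ediam (t k) := by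
          rw [hJik]
          calc ENNReal.ofReal ((2:ℝ)^(jf k)) ≤ ENNReal.ofReal (2 * rk k) :=
                ENNReal.ofReal_le_ofReal (hlk_lt k hk.2).le
            _ = ENNReal.ofReal 2 * ENNReal.ofReal (rk k) :=
                ENNReal.ofReal_mul (by norm_num)
            _ = 2 * Metric.ediam (t k) := by
                rw [ENNReal.ofReal_toReal (hdiam_ne_top k)]
                norm_num
        calc ENNReal.ofReal ((2:ℝ)^(J i)) ^ s ≤ (2 * Metric.ediam (t k)) ^ s :=
              ENNReal.rpow_le_rpow hle hs.le
          _ = (2:ℝ≥0∞)^s * Metric.ediam (t k) ^ s :=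
              ENNReal.mul_rpow_of_nonneg _ _ hs.le
      have hguard : (⨆ _ : (t k).Nonempty, Metric.ediam (t k) ^ s) =
          Metric.ediam (t k) ^ s := iSup_pos hk.1
      rw [Set.indicator_of_mem hm1, Set.indicator_of_mem hm2, hguard]
      calc ENNReal.ofReal ((2:ℝ)^(J (2*k))) ^ s + ENNReal.ofReal ((2:ℝ)^(J (2*k+1))) ^ s
          ≤ (2:ℝ≥0∞)^s * Metric.ediam (t k) ^ s + (2:ℝ≥0∞)^s * Metric.ediam (t k) ^ s :=
            add_le_add (hval _ h2k) (hval _ h2k1)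
        _ = (2:ℝ≥0∞)^(1+s) * Metric.ediam (t k) ^ s := by
            rw [ENNReal.rpow_add 1 s (by norm_num) (by norm_num), ENNReal.rpow_one]
            ring
    · have hm1 : (2*k) ∉ act := by rw [hactdef]; simpa [h2k] using hk
      have hm2 : (2*k+1) ∉ act := by rw [hactdef]; simpa [h2k1] using hk
      rw [Set.indicator_of_notMem hm1, Set.indicator_of_notMem hm2]
      simp
  have hofReal : ENNReal.ofReal ((2:ℝ)^(-(1+s)) * c) ≤ (2:ℝ≥0∞)^(-(1+s)) * m := by
    rw [ENNReal.ofReal_mul (by positivity)]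
    apply mul_le_mul'
    · rw [← ENNReal.ofReal_rpow_of_pos two_pos]
      norm_num
    · calc ENNReal.ofReal c ≤ ENNReal.ofReal (m:ℝ) := ENNReal.ofReal_le_ofReal hcm
        _ = (m : ℝ≥0∞) := ENNReal.ofReal_natCast m
  have h2pow_ne_zero : ((2:ℝ≥0∞)^(1+s)) ≠ 0 := by
    apply ne_of_gt
    exact ENNReal.rpow_pos (by norm_num) (by norm_num)
  have h2pow_ne_top : ((2:ℝ≥0∞)^(1+s)) ≠ ⊤ :=
    ENNReal.rpow_ne_top_of_nonneg (by linarith) (by norm_num)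
  calc ENNReal.ofReal ((2:ℝ)^(-(1+s)) * c) * Stmt7.nb s (An n) r
      ≤ ((2:ℝ≥0∞)^(-(1+s)) * m) * Stmt7.nb s (An n \ Z) r :=
        mul_le_mul' hofReal (Stmt7.nb_le_diff hs hZc r)
    _ = (2:ℝ≥0∞)^(-(1+s)) * ((m:ℝ≥0∞) * Stmt7.nb s (An n \ Z) r) := by ring
    _ ≤ (2:ℝ≥0∞)^(-(1+s)) * ((2:ℝ≥0∞)^(1+s) *
        ∑' k, ⨆ _ : (t k).Nonempty, Metric.ediam (t k) ^ s) :=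
        mul_le_mul' le_rfl (le_trans hmain hsum)
    _ = ∑' k, ⨆ _ : (t k).Nonempty, Metric.ediam (t k) ^ s := by
        rw [← mul_assoc, ENNReal.rpow_neg,
          ENNReal.inv_mul_cancel h2pow_ne_zero h2pow_ne_top, one_mul]

end
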